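/- Let L ≥ 2, N = L², let t ≥ 1 be an odd integer, and set l̃ = ⌊√(N/(4t))⌋. Then Σ_{k ∈ (ℤ/L)², k ≠ 0} 1/(1 − λ_k^t)² ≤ (2N²/t²) · Σ_{l=1}^{l̃} 1/l³ + (8/(1 − e^{−1})²) · Σ_{l=l̃+1}^{⌊L/2⌋} l (empty sums being zero). -/

import Mathlib

/-- The normalized adjacency matrix of the `L×L` torus graph on `(ℤ/L)²`:
`A(u,v)` is the number of the four unit coordinate steps leading from `u` to `v`,
divided by `4`. -/
noncomputable def torusAdj (L : ℕ) : Matrix (ZMod L × ZMod L) (ZMod L × ZMod L) ℝ :=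
  Matrix.of fun u v =>
    ((if u + (1, 0) = v then (1 : ℝ) else 0) + (if u + (-1, 0) = v then 1 else 0) +
      (if u + (0, 1) = v then 1 else 0) + (if u + (0, -1) = v then 1 else 0)) / 4

/-- The eigenvalue `λ_k = (cos(2π k_x/L) + cos(2π k_y/L))/2` of the torus adjacency matrix,
well-defined on residues since cosine is `2π`-periodic. -/
noncomputable def torusEig (L : ℕ) (k : ZMod L × ZMod L) : ℝ :=
  (Real.cos (2 * Real.pi * k.1.val / L) + Real.cos (2 * Real.pi * k.2.val / L)) / 2

namespace TorusAux

open Real Finset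

/-- Centered integer representative of a residue. -/
def ctr (L : ℕ) (z : ZMod L) : ℤ := if z.val ≤ L / 2 then (z.val : ℤ) else (z.val : ℤ) - L

lemma ctr_natAbs_le (L : ℕ) [NeZero L] (z : ZMod L) : (ctr L z).natAbs ≤ L / 2 := by
  have hv : z.val < L := ZMod.val_lt z
  unfold ctr; split <;> omega

lemma ctr_injective (L : ℕ) [NeZero L] : Function.Injective (ctr L) := by
  intro a b h
  have ha := ZMod.val_lt a; have hb := ZMod.val_lt b
  have : a.val = b.val := by unfold ctr at h; split at h <;> split at h <;> omega
  exact ZMod.val_injective L this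

lemma ctr_eq_zero (L : ℕ) [NeZero L] (z : ZMod L) : ctr L z = 0 ↔ z = 0 := by
  have hv : z.val < L := ZMod.val_lt z
  rw [← ZMod.val_eq_zero]
  unfold ctr; split <;> omega

lemma cos_ctr (L : ℕ) [NeZero L] (z : ZMod L) :
    Real.cos (2 * Real.pi * z.val / L) = Real.cos (2 * Real.pi * (ctr L z) / L) := by
  have hL : (L : ℝ) ≠ 0 := Nat.cast_ne_zero.2 (NeZero.ne L)
  unfold ctr; split
  · norm_num
  · push_cast
    have h : 2 * Real.pi * ((z.val : ℝ) - L) / L = 2 * Real.pi * z.val / L - 2 * Real.pi := by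
      field_simp
    rw [h, Real.cos_sub_two_pi]

lemma neg_one_le_eig (L : ℕ) (k : ZMod L × ZMod L) : -1 ≤ torusEig L k := by
  have h1 := Real.neg_one_le_cos (2 * Real.pi * (k.1.val : ℝ) / L)
  have h2 := Real.neg_one_le_cos (2 * Real.pi * (k.2.val : ℝ) / L)
  unfold torusEig; linarith

lemma eig_le (L : ℕ) [NeZero L] (k : ZMod L × ZMod L) :
    torusEig L k ≤ 1 - 4 * (((ctr L k.1 : ℝ)) ^ 2 + ((ctr L k.2 : ℝ)) ^ 2) / (L : ℝ) ^ 2 := by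
  have hπ := Real.pi_pos
  have hLR : (0 : ℝ) < L := by
    have := Nat.pos_of_ne_zero (NeZero.ne L); exact_mod_cast this
  have key : ∀ z : ZMod L,
      Real.cos (2 * Real.pi * z.val / L) ≤ 1 - 8 * ((ctr L z : ℝ)) ^ 2 / (L : ℝ) ^ 2 := by
    intro z
    rw [cos_ctr]
    set c : ℝ := ((ctr L z : ℤ) : ℝ) with hc
    have habs : |c| ≤ (L : ℝ) / 2 := by
      have h1 : (ctr L z).natAbs ≤ L / 2 := ctr_natAbs_le L z
      have h2 : |c| = (((ctr L z).natAbs : ℕ) : ℝ) := by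
        rw [hc]; symm; push_cast [Nat.cast_natAbs]; rfl
      calc |c| = (((ctr L z).natAbs : ℕ) : ℝ) := h2
        _ ≤ ((L / 2 : ℕ) : ℝ) := by exact_mod_cast h1
        _ ≤ (L : ℝ) / 2 := Nat.cast_div_le
    have hx : |2 * Real.pi * c / L| ≤ Real.pi := by
      have h : |2 * Real.pi * c / L| = 2 * Real.pi * |c| / L := by
        rw [abs_div, abs_mul, abs_of_pos (by positivity : (0:ℝ) < 2 * Real.pi),
          abs_of_pos hLR]
      rw [h, div_le_iff₀ hLR]
      nlinarith
    have hcos := Real.cos_le_one_sub_mul_cos_sq hx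
    have heq : 1 - 2 / Real.pi ^ 2 * (2 * Real.pi * c / L) ^ 2
        = 1 - 8 * c ^ 2 / (L : ℝ) ^ 2 := by
      field_simp
      ring
    rw [heq] at hcos
    exact hcos
  have h1 := key k.1
  have h2 := key k.2
  unfold torusEig
  have h3 : (Real.cos (2 * Real.pi * k.1.val / L) + Real.cos (2 * Real.pi * k.2.val / L)) / 2
      ≤ ((1 - 8 * ((ctr L k.1 : ℝ)) ^ 2 / (L : ℝ) ^ 2)
        + (1 - 8 * ((ctr L k.2 : ℝ)) ^ 2 / (L : ℝ) ^ 2)) / 2 := by linarith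
  calc _ ≤ _ := h3
    _ = 1 - 4 * (((ctr L k.1 : ℝ)) ^ 2 + ((ctr L k.2 : ℝ)) ^ 2) / (L : ℝ) ^ 2 := by ring

lemma pow_le_exp_of_le (lam x : ℝ) (t : ℕ) (hodd : Odd t) (hge : -1 ≤ lam) (hx : 0 ≤ x)
    (hle : lam ≤ 1 - x) : lam ^ t ≤ Real.exp (-(x * t)) := by
  rcases le_or_gt lam 0 with h | h
  · exact (Odd.pow_nonpos hodd h).trans (Real.exp_pos _).le
  · have h1 : (0 : ℝ) < 1 - x := lt_of_lt_of_le h hle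
    calc lam ^ t ≤ (1 - x) ^ t := pow_le_pow_left₀ h.le hle t
      _ ≤ (Real.exp (-x)) ^ t := by
          apply pow_le_pow_left₀ h1.le
          linarith [Real.add_one_le_exp (-x)]
      _ = Real.exp (-(x * t)) := by
          rw [← Real.exp_nat_mul]; congr 1; ring

lemma half_le_one_sub_exp {y : ℝ} (h0 : 0 ≤ y) (h1 : y ≤ 1) : y / 2 ≤ 1 - Real.exp (-y) := by
  have hc := convexOn_exp.2 (Set.mem_univ (-1 : ℝ)) (Set.mem_univ (0 : ℝ))
      h0 (by linarith : (0 : ℝ) ≤ 1 - y) (by ring)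
  simp only [smul_eq_mul, mul_zero, add_zero, mul_neg, mul_one, Real.exp_zero] at hc
  have he : Real.exp (-1) ≤ 1 / 2 := by
    rw [Real.exp_neg, inv_le_comm₀ (Real.exp_pos 1) (by norm_num)]
    have := Real.add_one_le_exp (1 : ℝ)
    linarith
  nlinarith [Real.exp_pos (-y)]

lemma shell_card (L : ℕ) [NeZero L] (l : ℕ) (hl : 1 ≤ l) :
    (Finset.univ.filter (fun k : ZMod L × ZMod L =>
        k ≠ 0 ∧ max (ctr L k.1).natAbs (ctr L k.2).natAbs = l)).card ≤ 8 * l := by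
  classical
  set R : Finset (ℤ × ℤ) :=
    (Finset.Icc (-(l : ℤ)) l ×ˢ Finset.Icc (-(l : ℤ)) l) \
      (Finset.Icc (-(l : ℤ) + 1) ((l : ℤ) - 1) ×ˢ Finset.Icc (-(l : ℤ) + 1) ((l : ℤ) - 1))
    with hR
  have hmap : ∀ k ∈ Finset.univ.filter (fun k : ZMod L × ZMod L =>
      k ≠ 0 ∧ max (ctr L k.1).natAbs (ctr L k.2).natAbs = l),
      (ctr L k.1, ctr L k.2) ∈ R := by
    intro k hk
    simp only [Finset.mem_filter, Finset.mem_univ, true_and] at hk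
    simp only [hR, Finset.mem_sdiff, Finset.mem_product, Finset.mem_Icc]
    omega
  have hinj : Set.InjOn (fun k : ZMod L × ZMod L => (ctr L k.1, ctr L k.2))
      (Finset.univ.filter (fun k : ZMod L × ZMod L =>
        k ≠ 0 ∧ max (ctr L k.1).natAbs (ctr L k.2).natAbs = l) : Set (ZMod L × ZMod L)) := by
    intro a _ b _ h
    simp only [Prod.mk.injEq] at h
    exact Prod.ext (ctr_injective L h.1) (ctr_injective L h.2)
  have hcard : R.card = 8 * l := by
    have hsub : Finset.Icc (-(l : ℤ) + 1) ((l : ℤ) - 1) ×ˢ Finset.Icc (-(l : ℤ) + 1) ((l : ℤ) - 1)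
        ⊆ Finset.Icc (-(l : ℤ)) l ×ˢ Finset.Icc (-(l : ℤ)) l :=
      Finset.product_subset_product (Finset.Icc_subset_Icc (by omega) (by omega))
        (Finset.Icc_subset_Icc (by omega) (by omega))
    rw [hR, Finset.card_sdiff_of_subset hsub, Finset.card_product, Finset.card_product,
      Int.card_Icc, Int.card_Icc]
    have e1 : ((l : ℤ) + 1 - -(l : ℤ)).toNat = 2 * l + 1 := by omega
    have e2 : ((l : ℤ) - 1 + 1 - (-(l : ℤ) + 1)).toNat = 2 * l - 1 := by omega
    rw [e1, e2]
    obtain ⟨j, rfl⟩ : ∃ j, l = j + 1 := ⟨l - 1, by omega⟩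
    have e3 : 2 * (j + 1) - 1 = 2 * j + 1 := by omega
    rw [e3]
    have : (2 * (j + 1) + 1) * (2 * (j + 1) + 1) = (2 * j + 1) * (2 * j + 1) + 8 * (j + 1) := by
      ring
    omega
  calc _ ≤ R.card := Finset.card_le_card_of_injOn _ hmap hinj
    _ = 8 * l := hcard

end TorusAux

set_option maxHeartbeats 1000000 in
open TorusAux Finset in
/-- For `L ≥ 2`, `N = L²`, odd `t ≥ 1`, and `l̃ = ⌊√(N/(4t))⌋`,
`Σ_{k ≠ 0} 1/(1 − λ_k^t)² ≤ (2N²/t²) Σ_{l=1}^{l̃} 1/l³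
  + (8/(1 − e^{−1})²) Σ_{l=l̃+1}^{⌊L/2⌋} l`. -/
theorem torus_sum_inv_one_sub_pow_sq_upper_bound
    (L : ℕ) [NeZero L] (hL : 2 ≤ L) (t : ℕ) (ht : 1 ≤ t) (hodd : Odd t)
    (N : ℕ) (hN : N = L ^ 2)
    (ltil : ℕ) (hltil : ltil = ⌊Real.sqrt ((N : ℝ) / (4 * t))⌋₊) :
    ∑ k ∈ Finset.univ.filter (fun k : ZMod L × ZMod L => k ≠ 0),
        1 / (1 - torusEig L k ^ t) ^ 2 ≤
      (2 * (N : ℝ) ^ 2 / (t : ℝ) ^ 2) * ∑ l ∈ Finset.Icc 1 ltil, 1 / (l : ℝ) ^ 3 +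
        (8 / (1 - Real.exp (-1)) ^ 2) * ∑ l ∈ Finset.Icc (ltil + 1) (L / 2), (l : ℝ) := by
  classical
  have hLpos : 0 < L := by omega
  have hLR : (0 : ℝ) < L := by exact_mod_cast hLpos
  have hNR : (N : ℝ) = (L : ℝ) ^ 2 := by rw [hN]; push_cast; ring
  have hNpos : (0 : ℝ) < N := by rw [hNR]; positivity
  have htR : (0 : ℝ) < t := by exact_mod_cast ht
  have hexp1 : Real.exp (-1) < 1 := by
    rw [← Real.exp_zero]; exact Real.exp_lt_exp.2 (by norm_num)
  have hepos : (0 : ℝ) < 1 - Real.exp (-1) := by linarith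
  have hsq0 : (0 : ℝ) ≤ (N : ℝ) / (4 * t) := by positivity
  set m := L / 2 with hm
  set s := Finset.univ.filter (fun k : ZMod L × ZMod L => k ≠ 0) with hs
  set lk : ZMod L × ZMod L → ℕ := fun k => max (ctr L k.1).natAbs (ctr L k.2).natAbs with hlk
  set B : ℕ → ℝ := fun l =>
    if l ≤ ltil then (N : ℝ) ^ 2 / (4 * (l : ℝ) ^ 4 * (t : ℝ) ^ 2)
    else (1 - Real.exp (-1))⁻¹ ^ 2 with hB
  have hBnonneg : ∀ l : ℕ, 0 ≤ B l := by
    intro l; rw [hB]; dsimp only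
    split
    · positivity
    · positivity
  -- shell index lies in [1, m]
  have hmem : ∀ k ∈ s, lk k ∈ Finset.Icc 1 m := by
    intro k hk
    simp only [hs, Finset.mem_filter, Finset.mem_univ, true_and] at hk
    rw [Finset.mem_Icc]
    constructor
    · by_contra h
      have h0 : max (ctr L k.1).natAbs (ctr L k.2).natAbs = 0 := by
        simp only [hlk] at h; omega
      have e1 : k.1 = 0 := (ctr_eq_zero L k.1).1 (by omega)
      have e2 : k.2 = 0 := (ctr_eq_zero L k.2).1 (by omega)
      exact hk (Prod.ext e1 e2)
    · have h1 := ctr_natAbs_le L k.1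
      have h2 := ctr_natAbs_le L k.2
      simp only [hlk]; omega
  -- per-point bound
  have hpt : ∀ k ∈ s, 1 / (1 - torusEig L k ^ t) ^ 2 ≤ B (lk k) := by
    intro k hk
    have hlk1 : 1 ≤ lk k := (Finset.mem_Icc.1 (hmem k hk)).1
    have hlR : (0 : ℝ) < (lk k : ℝ) := by exact_mod_cast hlk1
    have hsq : ((lk k : ℝ)) ^ 2 ≤ ((ctr L k.1 : ℝ)) ^ 2 + ((ctr L k.2 : ℝ)) ^ 2 := by
      have e1 : (((ctr L k.1).natAbs : ℝ)) ^ 2 = ((ctr L k.1 : ℝ)) ^ 2 := by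
        push_cast [Nat.cast_natAbs]; rw [sq_abs]
      have e2 : (((ctr L k.2).natAbs : ℝ)) ^ 2 = ((ctr L k.2 : ℝ)) ^ 2 := by
        push_cast [Nat.cast_natAbs]; rw [sq_abs]
      rcases max_choice (ctr L k.1).natAbs (ctr L k.2).natAbs with h | h
      · have hh : lk k = (ctr L k.1).natAbs := by simp only [hlk]; exact h
        rw [hh, e1]; nlinarith [sq_nonneg ((ctr L k.2 : ℝ))]
      · have hh : lk k = (ctr L k.2).natAbs := by simp only [hlk]; exact h
        rw [hh, e2]; nlinarith [sq_nonneg ((ctr L k.1 : ℝ))]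
    have hx0 : (0 : ℝ) < 4 * (lk k : ℝ) ^ 2 / N := by positivity
    have hlam_le : torusEig L k ≤ 1 - 4 * (lk k : ℝ) ^ 2 / N := by
      have h1 := eig_le L k
      have h2 : 4 * (lk k : ℝ) ^ 2 / N
          ≤ 4 * (((ctr L k.1 : ℝ)) ^ 2 + ((ctr L k.2 : ℝ)) ^ 2) / (L : ℝ) ^ 2 := by
        rw [hNR]; gcongr
      linarith
    have hpow : torusEig L k ^ t ≤ Real.exp (-(4 * (lk k : ℝ) ^ 2 / N * t)) :=
      pow_le_exp_of_le _ _ t hodd (neg_one_le_eig L k) hx0.le hlam_le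
    set y : ℝ := 4 * (lk k : ℝ) ^ 2 / N * t with hy
    have hy0 : (0 : ℝ) < y := by positivity
    by_cases hcase : lk k ≤ ltil
    · -- small shell : y ≤ 1, use 1 - e^{-y} ≥ y/2
      have hfl : (lk k : ℝ) ≤ Real.sqrt ((N : ℝ) / (4 * t)) := by
        rw [hltil] at hcase
        exact (Nat.le_floor_iff (Real.sqrt_nonneg _)).1 hcase
      have hl2 : (lk k : ℝ) ^ 2 ≤ (N : ℝ) / (4 * t) := by
        have := pow_le_pow_left₀ (by positivity : (0 : ℝ) ≤ (lk k : ℝ)) hfl 2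
        rwa [Real.sq_sqrt hsq0] at this
      have hl2' : (lk k : ℝ) ^ 2 * (4 * t) ≤ N := by
        rwa [le_div_iff₀ (by positivity)] at hl2
      have hy1 : y ≤ 1 := by
        rw [hy, div_mul_eq_mul_div, div_le_one hNpos]
        nlinarith
      have hden : y / 2 ≤ 1 - torusEig L k ^ t := by
        have := half_le_one_sub_exp hy0.le hy1
        linarith
      have hfinal : 1 / (1 - torusEig L k ^ t) ^ 2 ≤ 1 / (y / 2) ^ 2 := by
        apply one_div_le_one_div_of_le (by positivity)
        exact pow_le_pow_left₀ (by positivity) hden 2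
      have hBval : B (lk k) = (N : ℝ) ^ 2 / (4 * (lk k : ℝ) ^ 4 * (t : ℝ) ^ 2) := by
        rw [hB]; exact if_pos hcase
      have hyval : 1 / (y / 2) ^ 2 = (N : ℝ) ^ 2 / (4 * (lk k : ℝ) ^ 4 * (t : ℝ) ^ 2) := by
        rw [hy]; field_simp; ring
      rw [hBval, ← hyval]
      exact hfinal
    · -- large shell : y ≥ 1, use 1 - e^{-y} ≥ 1 - e^{-1}
      have hl1 : ltil < lk k := by omega
      have hfl : Real.sqrt ((N : ℝ) / (4 * t)) < (lk k : ℝ) := by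
        rw [hltil] at hl1
        exact (Nat.floor_lt (Real.sqrt_nonneg _)).1 hl1
      have hl2 : (N : ℝ) / (4 * t) < (lk k : ℝ) ^ 2 :=
        (Real.sqrt_lt' hlR).1 hfl
      have hl2' : (N : ℝ) < (lk k : ℝ) ^ 2 * (4 * t) := by
        rwa [div_lt_iff₀ (by positivity)] at hl2
      have hy1 : 1 ≤ y := by
        rw [hy, div_mul_eq_mul_div, le_div_iff₀ hNpos]
        nlinarith
      have hden : 1 - Real.exp (-1) ≤ 1 - torusEig L k ^ t := by
        have h3 : Real.exp (-y) ≤ Real.exp (-1) := Real.exp_le_exp.2 (by linarith)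
        linarith
      have hfinal : 1 / (1 - torusEig L k ^ t) ^ 2 ≤ 1 / (1 - Real.exp (-1)) ^ 2 := by
        apply one_div_le_one_div_of_le (by positivity)
        exact pow_le_pow_left₀ hepos.le hden 2
      have hBval : B (lk k) = (1 - Real.exp (-1))⁻¹ ^ 2 := by
        rw [hB]; exact if_neg hcase
      rw [hBval, inv_pow, ← one_div]
      exact hfinal
  -- group the sum into shells
  have hstep1 : ∑ k ∈ s, 1 / (1 - torusEig L k ^ t) ^ 2
      ≤ ∑ l ∈ Finset.Icc 1 m, 8 * (l : ℝ) * B l := by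
    calc ∑ k ∈ s, 1 / (1 - torusEig L k ^ t) ^ 2 ≤ ∑ k ∈ s, B (lk k) :=
          Finset.sum_le_sum hpt
      _ = ∑ l ∈ Finset.Icc 1 m, ∑ k ∈ s.filter (fun k => lk k = l), B (lk k) :=
          (Finset.sum_fiberwise_of_maps_to hmem _).symm
      _ ≤ _ := by
          apply Finset.sum_le_sum
          intro l hl
          have hl1 : 1 ≤ l := (Finset.mem_Icc.1 hl).1
          have hsum_eq : ∑ k ∈ s.filter (fun k => lk k = l), B (lk k)
              = (s.filter (fun k => lk k = l)).card • B l := by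
            rw [← Finset.sum_const]
            apply Finset.sum_congr rfl
            intro k hk
            rw [(Finset.mem_filter.1 hk).2]
          rw [hsum_eq, nsmul_eq_mul]
          have hcard : (s.filter (fun k => lk k = l)).card ≤ 8 * l := by
            have heq2 : s.filter (fun k => lk k = l)
                = Finset.univ.filter (fun k : ZMod L × ZMod L =>
                    k ≠ 0 ∧ max (ctr L k.1).natAbs (ctr L k.2).natAbs = l) := by
              rw [hs, Finset.filter_filter]
            rw [heq2]
            exact shell_card L l hl1
          have hB0 := hBnonneg l
          have hc : ((s.filter (fun k => lk k = l)).card : ℝ) ≤ 8 * (l : ℝ) := by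
            exact_mod_cast hcard
          nlinarith
  -- split the shell sum at ltil
  have hsplit : ∑ l ∈ Finset.Icc 1 m, 8 * (l : ℝ) * B l
      = ∑ l ∈ (Finset.Icc 1 m).filter (fun l => l ≤ ltil), 8 * (l : ℝ) * B l
        + ∑ l ∈ (Finset.Icc 1 m).filter (fun l => ¬l ≤ ltil), 8 * (l : ℝ) * B l :=
    (Finset.sum_filter_add_sum_filter_not _ _ _).symm
  have h1 : ∑ l ∈ (Finset.Icc 1 m).filter (fun l => l ≤ ltil), 8 * (l : ℝ) * B l
      ≤ (2 * (N : ℝ) ^ 2 / (t : ℝ) ^ 2) * ∑ l ∈ Finset.Icc 1 ltil, 1 / (l : ℝ) ^ 3 := by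
    rw [Finset.mul_sum]
    have heq : ∀ l ∈ (Finset.Icc 1 m).filter (fun l => l ≤ ltil),
        8 * (l : ℝ) * B l = 2 * (N : ℝ) ^ 2 / (t : ℝ) ^ 2 * (1 / (l : ℝ) ^ 3) := by
      intro l hl
      simp only [Finset.mem_filter, Finset.mem_Icc] at hl
      have hl0 : (0 : ℝ) < l := by exact_mod_cast hl.1.1
      rw [hB]
      simp only [hl.2, if_true]
      field_simp
      ring
    rw [Finset.sum_congr rfl heq]
    apply Finset.sum_le_sum_of_subset_of_nonneg
    · intro l hl
      simp only [Finset.mem_filter, Finset.mem_Icc] at hl ⊢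
      omega
    · intro l _ _
      positivity
  have h2 : ∑ l ∈ (Finset.Icc 1 m).filter (fun l => ¬l ≤ ltil), 8 * (l : ℝ) * B l
      ≤ (8 / (1 - Real.exp (-1)) ^ 2) * ∑ l ∈ Finset.Icc (ltil + 1) m, (l : ℝ) := by
    rw [Finset.mul_sum]
    have heq : ∀ l ∈ (Finset.Icc 1 m).filter (fun l => ¬l ≤ ltil),
        8 * (l : ℝ) * B l = 8 / (1 - Real.exp (-1)) ^ 2 * (l : ℝ) := by
      intro l hl
      simp only [Finset.mem_filter, Finset.mem_Icc] at hl
      rw [hB]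
      simp only [hl.2, if_false]
      rw [inv_pow]
      field_simp
    rw [Finset.sum_congr rfl heq]
    apply Finset.sum_le_sum_of_subset_of_nonneg
    · intro l hl
      simp only [Finset.mem_filter, Finset.mem_Icc] at hl ⊢
      omega
    · intro l _ _
      positivity
  calc ∑ k ∈ s, 1 / (1 - torusEig L k ^ t) ^ 2
      ≤ ∑ l ∈ Finset.Icc 1 m, 8 * (l : ℝ) * B l := hstep1
    _ = _ + _ := hsplit
    _ ≤ _ := add_le_add h1 h2
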